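/- Let L ∈ ℝ^{N×N} be a symmetric positive semidefinite matrix whose kernel is spanned by the all-ones vector 𝟙, and let W₁,…,W_N be matrices (W_i ∈ ℝ^{n×w_i}) each with orthonormal columns such that the intersection of the column spaces ∩_{i=1}^N Im(W_i) = {0}. Then the block matrix Wᵀ(L ⊗ I_n)W, with W = diag(W₁,…,W_N), is positive definite. -/

import Mathlib

open Matrix

/-- If L ∈ ℝ^{N×N} is symmetric PSD with kernel spanned by the all-ones
vector, and W₁,…,W_N have orthonormal columns with ∩ᵢ Im(Wᵢ) = {0}, then
Wᵀ(L ⊗ Iₙ)W is positive definite, where W = blockdiag(W₁,…,W_N). -/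
theorem stmt6 {N n : ℕ} (w : Fin N → ℕ)
    (L : Matrix (Fin N) (Fin N) ℝ)
    (hLsymm : L.IsSymm) (hLpsd : L.PosSemidef)
    (hker : LinearMap.ker L.mulVecLin = Submodule.span ℝ {fun _ => (1 : ℝ)})
    (Ws : (i : Fin N) → Matrix (Fin n) (Fin (w i)) ℝ)
    (horth : ∀ i, (Ws i)ᵀ * Ws i = 1)
    (hjoint : ⨅ i, LinearMap.range (Ws i).mulVecLin = ⊥)
    (W : Matrix (Fin N × Fin n) ((i : Fin N) × Fin (w i)) ℝ)
    (hW : ∀ i r j c, W (i, r) ⟨j, c⟩ = if i = j then Ws j r c else 0) :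
    (Wᵀ * (kroneckerMap (· * ·) L (1 : Matrix (Fin n) (Fin n) ℝ)) * W).PosDef := by
  set K := kroneckerMap (· * ·) L (1 : Matrix (Fin n) (Fin n) ℝ) with hKdef
  have hWct : Wᵀ = Wᴴ := (conjTranspose_eq_transpose_of_trivial W).symm
  -- K is PSD
  have hK : K.PosSemidef := by
    obtain ⟨B, hB⟩ : ∃ B : Matrix (Fin N) (Fin N) ℝ, L = Bᴴ * B := by
      open scoped MatrixOrder in exact CStarAlgebra.nonneg_iff_eq_star_mul_self.mp hLpsd.nonneg
    have h1 : K = (kroneckerMap (· * ·) B (1 : Matrix (Fin n) (Fin n) ℝ))ᴴ *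
        (kroneckerMap (· * ·) B (1 : Matrix (Fin n) (Fin n) ℝ)) := by
      have h2 : (kroneckerMap (· * ·) B (1 : Matrix (Fin n) (Fin n) ℝ))ᴴ =
          kroneckerMap (· * ·) Bᴴ (1 : Matrix (Fin n) (Fin n) ℝ) := by
        ext ⟨i, k⟩ ⟨j, l⟩
        simp [conjTranspose_apply, kroneckerMap_apply, Matrix.one_apply, eq_comm]
      rw [h2, ← Matrix.mul_kronecker_mul, one_mul, ← hB]
    rw [h1]
    exact posSemidef_conjTranspose_mul_self _
  have hM : (Wᵀ * K * W).PosSemidef := by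
    rw [hWct]; exact hK.conjTranspose_mul_mul_same W
  refine ⟨hM.1, fun x hx => ?_⟩
  rcases lt_or_eq_of_le (hM.2 x) with h | h
  · exact h
  exfalso
  apply hx
  -- quadratic form is zero, derive K *ᵥ (W *ᵥ x) = 0
  have hform : star (W *ᵥ x) ⬝ᵥ K *ᵥ (W *ᵥ x) = 0 := by
    have : star x ⬝ᵥ (Wᵀ * K * W) *ᵥ x = star (W *ᵥ x) ⬝ᵥ K *ᵥ (W *ᵥ x) := by
      rw [hWct, ← mulVec_mulVec, ← mulVec_mulVec, dotProduct_mulVec, ← star_mulVec]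
    rw [← this, h]
    simp [dotProduct, mulVec, Finsupp.sum_fintype, Finset.mul_sum, mul_assoc]
  have hKv0 : K *ᵥ (W *ᵥ x) = 0 := (hK.dotProduct_mulVec_zero_iff _).mp hform
  set v := W *ᵥ x with hvdef
  -- entrywise formula for K *ᵥ v
  have hKv : ∀ (u : Fin N × Fin n → ℝ) (i : Fin N) (k : Fin n),
      (K *ᵥ u) (i, k) = (L *ᵥ fun j => u (j, k)) i := by
    intro u i k
    simp only [mulVec, dotProduct, hKdef, kroneckerMap_apply, Matrix.one_apply]
    rw [Fintype.sum_prod_type]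
    congr 1
    ext j
    simp [mul_ite, ite_mul, mul_zero, zero_mul, Finset.sum_ite_eq, Finset.sum_ite_eq']
  -- each column slice is in ker L hence constant
  have hconst : ∀ (k : Fin n), ∃ r : ℝ, ∀ j : Fin N, v (j, k) = r := by
    intro k
    have hmem : (fun j => v (j, k)) ∈ LinearMap.ker L.mulVecLin := by
      rw [LinearMap.mem_ker]
      ext i
      have := congrFun hKv0 (i, k)
      rw [hKv v i k] at this
      simpa using this
    rw [hker, Submodule.mem_span_singleton] at hmem
    obtain ⟨r, hr⟩ := hmem
    exact ⟨r, fun j => by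
      have := congrFun hr j
      simpa [eq_comm] using this⟩
  -- block formula for W *ᵥ x
  have hWx : ∀ (i : Fin N) (k : Fin n),
      v (i, k) = (Ws i *ᵥ fun cc => x ⟨i, cc⟩) k := by
    intro i k
    simp only [hvdef, mulVec, dotProduct]
    rw [← Finset.univ_sigma_univ, Finset.sum_sigma]
    rw [Finset.sum_eq_single i]
    · simp [hW]
    · intro j _ hj
      simp [hW, Ne.symm hj]
    · simp
  -- show each block of x is zero
  ext ⟨i, cc⟩
  have hv0 : (fun k => v (i, k)) = 0 := by
    have hmem : (fun k => v (i, k)) ∈ (⊥ : Submodule ℝ (Fin n → ℝ)) := by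
      rw [← hjoint, Submodule.mem_iInf]
      intro j
      refine ⟨fun cc => x ⟨j, cc⟩, ?_⟩
      ext k
      obtain ⟨r, hr⟩ := hconst k
      rw [mulVecLin_apply, ← hWx j k, hr j, hr i]
    simpa using hmem
  have hWsx : Ws i *ᵥ (fun cc => x ⟨i, cc⟩) = 0 := by
    ext k
    rw [← hWx i k]
    exact congrFun hv0 k
  have : (fun cc => x ⟨i, cc⟩) = 0 := by
    have h1 : ((Ws i)ᵀ * Ws i) *ᵥ (fun cc => x ⟨i, cc⟩) = 0 := by
      rw [← mulVec_mulVec, hWsx, mulVec_zero]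
    rw [horth i, one_mulVec] at h1
    exact h1
  exact congrFun this cc
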